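/- arXiv:2101.02610 — 2 statements merged into one kernel-verified Lean document; each statement's English description precedes it below -/
import Mathlib

section
/- Let (X, d, T) be a topological dynamical system, μ ∈ E_T(X), δ ∈ (0,1), ε > 0 and c ≥ 0. If for μ-a.e. x ∈ X one has liminf_{n→∞} −(1/n) log μ(B_n(x,ε)) ≥ c, then h_μ^K(ε/4, δ) ≥ c. In particular, the Katok entropy h_μ^K(ε/4, δ) is bounded below by the lower Brin–Katok local entropy h̲_μ^{BK}(ε) (the μ-a.e. constant value of x ↦ liminf_{n→∞} −(1/n) log μ(B_n(x,ε))). -/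
open Filter MeasureTheory Set Topology

variable {X : Type*}

/-- The dynamical (Bowen) metric `d_n(x,y) = max_{0 ≤ k ≤ n-1} d(T^k x, T^k y)`. -/
noncomputable def dynDist [MetricSpace X] (T : X → X) (n : ℕ) (x y : X) : ℝ :=
  ⨆ k ∈ Finset.range n, dist (T^[k] x) (T^[k] y)

/-- The open dynamical ball `B_n(x, ε) = {y : d_n(x,y) < ε}`. -/
def dynBall [MetricSpace X] (T : X → X) (n : ℕ) (x : X) (ε : ℝ) : Set X :=
  {y | dynDist T n x y < ε}

/-- `s_n(K, ε)`: the maximal cardinality of an `(n,ε)`-separated subset of `K`. -/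
noncomputable def sepNum [MetricSpace X] (T : X → X) (n : ℕ) (K : Set X) (ε : ℝ) : ℕ :=
  sSup {m | ∃ E : Finset X, ↑E ⊆ K ∧
    (∀ x ∈ E, ∀ y ∈ E, x ≠ y → ε < dynDist T n x y) ∧ E.card = m}

/-- `S(K, ε) = limsup_n (1/n) log s_n(K, ε)`. -/
noncomputable def sepEnt [MetricSpace X] (T : X → X) (K : Set X) (ε : ℝ) : EReal :=
  limsup (fun n : ℕ => ((Real.log (sepNum T n K ε) / n : ℝ) : EReal)) atTop

/-- `r_n(K, ε)`: the minimal cardinality of an `(n,ε)`-spanning set for `K`. -/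
noncomputable def spanNum [MetricSpace X] (T : X → X) (n : ℕ) (K : Set X) (ε : ℝ) : ℕ :=
  sInf {m | ∃ F : Finset X, (∀ x ∈ K, ∃ y ∈ F, dynDist T n x y ≤ ε) ∧ F.card = m}

/-- `R(K, ε) = limsup_n (1/n) log r_n(K, ε)`. -/
noncomputable def spanEnt [MetricSpace X] (T : X → X) (K : Set X) (ε : ℝ) : EReal :=
  limsup (fun n : ℕ => ((Real.log (spanNum T n K ε) / n : ℝ) : EReal)) atTop

/-- Upper metric mean dimension. -/
noncomputable def mdimUpper [MetricSpace X] (T : X → X) : EReal :=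
  limsup (fun ε : ℝ => sepEnt T univ ε / ((Real.log (1 / ε) : ℝ) : EReal)) (𝓝[>] (0:ℝ))

/-- Lower metric mean dimension. -/
noncomputable def mdimLower [MetricSpace X] (T : X → X) : EReal :=
  liminf (fun ε : ℝ => sepEnt T univ ε / ((Real.log (1 / ε) : ℝ) : EReal)) (𝓝[>] (0:ℝ))

/-- The ergodic `T`-invariant Borel probability measures. -/
def ergodicMeasures [MeasurableSpace X] (T : X → X) : Set (Measure X) :=
  {μ | IsProbabilityMeasure μ ∧ Ergodic T μ}

/-- `U` is a finite open cover of `X`. -/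
def IsFiniteOpenCover [TopologicalSpace X] (U : Finset (Set X)) : Prop :=
  (∀ V ∈ U, IsOpen V) ∧ ⋃₀ (U : Set (Set X)) = univ

/-- The cover `U^n = ⋁_{i=0}^{n-1} T^{-i} U`. -/
def dynRefine (T : X → X) (U : Finset (Set X)) (n : ℕ) : Set (Set X) :=
  {V | ∃ f : Fin n → Set X, (∀ i, f i ∈ U) ∧ V = ⋂ i : Fin n, T^[(i : ℕ)] ⁻¹' f i}

/-- `N(C)`: the minimal cardinality of a subcover of `C`. -/
noncomputable def coverNum (C : Set (Set X)) : ℕ :=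
  sInf {m | ∃ F : Finset (Set X), ↑F ⊆ C ∧ ⋃₀ (F : Set (Set X)) = univ ∧ F.card = m}

/-- `N_μ(U^n, δ)`: minimal number of members of `U^n` needed to cover a set of measure ≥ δ. -/
noncomputable def shapiraNum [MeasurableSpace X] (T : X → X) (μ : Measure X)
    (U : Finset (Set X)) (n : ℕ) (δ : ℝ) : ℕ :=
  sInf {m | ∃ F : Finset (Set X), ↑F ⊆ dynRefine T U n ∧
    ENNReal.ofReal δ ≤ μ (⋃₀ (F : Set (Set X))) ∧ F.card = m}

/-- Shapira's entropy `h_μ^S(U, δ) = limsup_n (1/n) log N_μ(U^n, δ)`. -/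
noncomputable def shapiraEnt [MeasurableSpace X] (T : X → X) (μ : Measure X)
    (U : Finset (Set X)) (δ : ℝ) : EReal :=
  limsup (fun n : ℕ => ((Real.log (shapiraNum T μ U n δ) / n : ℝ) : EReal)) atTop

/-- `N_μ^δ(n, ε)`: smallest number of open `(n,ε)`-dynamical balls whose union has
measure `> δ`. -/
noncomputable def katokNum [MetricSpace X] [MeasurableSpace X] (T : X → X) (μ : Measure X)
    (n : ℕ) (ε δ : ℝ) : ℕ :=
  sInf {m | ∃ F : Finset X, ENNReal.ofReal δ < μ (⋃ x ∈ F, dynBall T n x ε) ∧ F.card = m}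

/-- Katok's entropy `h_μ^K(ε, δ) = limsup_n (1/n) log N_μ^δ(n, ε)`. -/
noncomputable def katokEnt [MetricSpace X] [MeasurableSpace X] (T : X → X) (μ : Measure X)
    (ε δ : ℝ) : EReal :=
  limsup (fun n : ℕ => ((Real.log (katokNum T μ n ε δ) / n : ℝ) : EReal)) atTop

/-- Lower Katok entropy `h̲_μ^K(ε, δ) = liminf_n (1/n) log N_μ^δ(n, ε)`. -/
noncomputable def katokEntLower [MetricSpace X] [MeasurableSpace X] (T : X → X) (μ : Measure X)
    (ε δ : ℝ) : EReal :=
  liminf (fun n : ℕ => ((Real.log (katokNum T μ n ε δ) / n : ℝ) : EReal)) atTop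

/-- `Ñ_μ^δ(n, ε)`: smallest number of sets of `d_n`-diameter ≤ ε whose union has
measure `> δ`. -/
noncomputable def katokNumTilde [MetricSpace X] [MeasurableSpace X] (T : X → X) (μ : Measure X)
    (n : ℕ) (ε δ : ℝ) : ℕ :=
  sInf {m | ∃ F : Finset (Set X), (∀ A ∈ F, ∀ x ∈ A, ∀ y ∈ A, dynDist T n x y ≤ ε) ∧
    ENNReal.ofReal δ < μ (⋃₀ (F : Set (Set X))) ∧ F.card = m}

/-- Brin–Katok local entropy `h_μ^{BK}(x, ε) = limsup_n -(1/n) log μ(B_n(x, ε))`. -/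
noncomputable def brinKatok [MetricSpace X] [MeasurableSpace X] (T : X → X) (μ : Measure X)
    (x : X) (ε : ℝ) : EReal :=
  limsup (fun n : ℕ => -(ENNReal.log (μ (dynBall T n x ε))) / (n : EReal)) atTop

/-- Lower Brin–Katok local entropy `h̲_μ^{BK}(x, ε) = liminf_n -(1/n) log μ(B_n(x, ε))`. -/
noncomputable def brinKatokLower [MetricSpace X] [MeasurableSpace X] (T : X → X) (μ : Measure X)
    (x : X) (ε : ℝ) : EReal :=
  liminf (fun n : ℕ => -(ENNReal.log (μ (dynBall T n x ε))) / (n : EReal)) atTop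

/-- Local entropy function `h_d(x, ε) = inf { S(K, ε) : K closed neighborhood of x }`. -/
noncomputable def locEnt [MetricSpace X] (T : X → X) (x : X) (ε : ℝ) : EReal :=
  ⨅ K ∈ {K : Set X | IsClosed K ∧ K ∈ 𝓝 x}, sepEnt T K ε

/-- Local spanning entropy `h̃_d(x, ε) = inf { R(K, ε) : K closed neighborhood of x }`. -/
noncomputable def locSpanEnt [MetricSpace X] (T : X → X) (x : X) (ε : ℝ) : EReal :=
  ⨅ K ∈ {K : Set X | IsClosed K ∧ K ∈ 𝓝 x}, spanEnt T K ε

/-- `U_x^n`: the union of all cells of `U^n` containing `x`. -/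
def dynCoverCell (T : X → X) (U : Finset (Set X)) (n : ℕ) (x : X) : Set X :=
  ⋃₀ {V | V ∈ dynRefine T U n ∧ x ∈ V}


section AuxLemmas
open scoped ENNReal NNReal

lemma dynDist_nonneg [MetricSpace X] (T : X → X) (n : ℕ) (x y : X) : 0 ≤ dynDist T n x y := by
  apply Real.iSup_nonneg; intro k; exact Real.iSup_nonneg fun _ => dist_nonneg

lemma bddAbove_dynDist_aux [MetricSpace X] (T : X → X) (n : ℕ) (x y : X) :
    BddAbove (Set.range fun k => ⨆ _ : k ∈ Finset.range n, dist (T^[k] x) (T^[k] y)) := by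
  refine ⟨∑ k ∈ Finset.range n, dist (T^[k] x) (T^[k] y), ?_⟩
  rintro r ⟨k, rfl⟩
  refine Real.iSup_le (fun hk => ?_) (Finset.sum_nonneg fun (i:ℕ) _ => dist_nonneg)
  exact Finset.single_le_sum (f := fun k => dist (T^[k] x) (T^[k] y)) (fun i _ => dist_nonneg) hk

lemma dist_le_dynDist [MetricSpace X] (T : X → X) {n k : ℕ} (hk : k < n) (x y : X) :
    dist (T^[k] x) (T^[k] y) ≤ dynDist T n x y := by
  have h1 : dist (T^[k] x) (T^[k] y) = ⨆ _ : k ∈ Finset.range n, dist (T^[k] x) (T^[k] y) :=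
    (ciSup_pos (p := k ∈ Finset.range n) (f := fun _ => dist (T^[k] x) (T^[k] y)) (Finset.mem_range.2 hk)).symm
  rw [h1]
  exact le_ciSup (bddAbove_dynDist_aux T n x y) k

lemma dynDist_le [MetricSpace X] (T : X → X) {n : ℕ} {x y : X} {a : ℝ} (ha : 0 ≤ a)
    (h : ∀ k < n, dist (T^[k] x) (T^[k] y) ≤ a) : dynDist T n x y ≤ a := by
  refine Real.iSup_le (fun k => Real.iSup_le (fun hk => h k (Finset.mem_range.1 hk)) ha) ha

lemma dynDist_self [MetricSpace X] (T : X → X) (n : ℕ) (x : X) : dynDist T n x x = 0 :=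
  le_antisymm (dynDist_le T le_rfl (by simp)) (dynDist_nonneg T n x x)

lemma dynDist_comm [MetricSpace X] (T : X → X) (n : ℕ) (x y : X) :
    dynDist T n x y = dynDist T n y x := by
  unfold dynDist; simp_rw [dist_comm]

lemma dynDist_triangle [MetricSpace X] (T : X → X) (n : ℕ) (x y z : X) :
    dynDist T n x z ≤ dynDist T n x y + dynDist T n y z := by
  refine dynDist_le T (add_nonneg (dynDist_nonneg T n x y) (dynDist_nonneg T n y z))
    (fun k hk => (dist_triangle _ (T^[k] y) _).trans
      (add_le_add (dist_le_dynDist T hk x y) (dist_le_dynDist T hk y z)))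

variable [MetricSpace X]

lemma mem_dynBall_self (T : X → X) (n : ℕ) (x : X) {ε : ℝ} (hε : 0 < ε) :
    x ∈ dynBall T n x ε := by
  simp [dynBall, dynDist_self, hε]

lemma dynBall_eq (T : X → X) (n : ℕ) (x : X) {ε : ℝ} (hε : 0 < ε) :
    dynBall T n x ε = ⋂ k ∈ Finset.range n, (T^[k]) ⁻¹' Metric.ball (T^[k] x) ε := by
  ext y
  simp only [dynBall, mem_setOf_eq, mem_iInter, mem_preimage, Metric.mem_ball, Finset.mem_range,
    dist_comm (T^[_] y)]
  constructor
  · intro hy k hk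
    exact lt_of_le_of_lt (dist_le_dynDist T hk x y) hy
  · intro hy
    rcases Nat.eq_zero_or_pos n with rfl | hn
    · have : dynDist T 0 x y ≤ 0 := dynDist_le T le_rfl (by omega)
      linarith
    · have hne : (Finset.range n).Nonempty := ⟨0, Finset.mem_range.2 hn⟩
      obtain ⟨k0, hk0, hMk⟩ := Finset.exists_mem_eq_sup' hne (fun k => dist (T^[k] x) (T^[k] y))
      have hM0 : 0 ≤ (Finset.range n).sup' hne fun k => dist (T^[k] x) (T^[k] y) := by
        rw [hMk]; exact dist_nonneg
      have hle : dynDist T n x y ≤ (Finset.range n).sup' hne fun k => dist (T^[k] x) (T^[k] y) :=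
        dynDist_le T hM0
          (fun k hk => Finset.le_sup' (fun k => dist (T^[k] x) (T^[k] y)) (Finset.mem_range.2 hk))
      refine lt_of_le_of_lt hle ?_
      rw [hMk]; exact hy k0 (Finset.mem_range.1 hk0)

lemma isOpen_dynBall {T : X → X} (hT : Continuous T) (n : ℕ) (x : X) {ε : ℝ} (hε : 0 < ε) :
    IsOpen (dynBall T n x ε) := by
  rw [dynBall_eq T n x hε]
  exact isOpen_biInter_finset fun k _ =>
    Metric.isOpen_ball.preimage (hT.iterate k)

lemma dynBall_mono (T : X → X) (n : ℕ) (x : X) {ε ε' : ℝ} (h : ε ≤ ε') :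
    dynBall T n x ε ⊆ dynBall T n x ε' := fun y hy => lt_of_lt_of_le hy h

lemma dynBall_subset_of_mem (T : X → X) (n : ℕ) {x y : X} {ε : ℝ} (hε : 0 < ε)
    (hxy : dynDist T n y x < ε / 4) : dynBall T n y (ε / 4) ⊆ dynBall T n x ε := by
  intro z hz
  have := dynDist_triangle T n x y z
  have h2 : dynDist T n x y < ε / 4 := by rwa [dynDist_comm] at hxy
  simp only [dynBall, mem_setOf_eq] at hz ⊢
  linarith

lemma lowerSemicontinuous_measure_dynBall [MeasurableSpace X] [BorelSpace X]
    {T : X → X} (hT : Continuous T) (μ : Measure X) (n : ℕ) {ε : ℝ} (hε : 0 < ε) :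
    LowerSemicontinuous fun x => μ (dynBall T n x ε) := by
  intro x0 t ht
  have hU : dynBall T n x0 ε = ⋃ q : ℕ, dynBall T n x0 (ε - 1/(q+1)) := by
    ext y; simp only [dynBall, mem_setOf_eq, mem_iUnion]
    constructor
    · intro hy
      obtain ⟨q, hq⟩ := exists_nat_one_div_lt (sub_pos.2 hy)
      exact ⟨q, by push_cast at hq ⊢; linarith⟩
    · rintro ⟨q, hq⟩
      have : (0:ℝ) < 1/(q+1) := by positivity
      linarith
  have hmono : Monotone (fun q : ℕ => dynBall T n x0 (ε - 1/(q+1))) := by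
    intro q q' hq
    apply dynBall_mono
    have : (1:ℝ)/(q'+1) ≤ 1/(q+1) := by
      apply one_div_le_one_div_of_le (by positivity)
      have : (q:ℝ) ≤ q' := Nat.cast_le.2 hq
      linarith
    linarith
  have := Directed.measure_iUnion (μ := μ) (s := fun q : ℕ => dynBall T n x0 (ε - 1/(q+1)))
    hmono.directed_le
  simp only at ht
  rw [hU, this, gt_iff_lt, lt_iSup_iff] at ht
  obtain ⟨q, hq⟩ := ht
  set η := 1/((q:ℝ)+1) with hη
  have hη0 : 0 < η := by positivity
  have hmem : dynBall T n x0 η ∈ 𝓝 x0 :=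
    (isOpen_dynBall hT n x0 hη0).mem_nhds (mem_dynBall_self T n x0 hη0)
  filter_upwards [hmem] with x hx
  refine lt_of_lt_of_le hq (measure_mono ?_)
  intro z hz
  simp only [dynBall, mem_setOf_eq] at hx hz ⊢
  have h1 := dynDist_triangle T n x x0 z
  have h2 : dynDist T n x x0 < η := by rwa [dynDist_comm] at hx
  linarith

lemma le_exp_bound_of_lt {g : ENNReal} {b : ℝ} {n : ℕ} (hn : 1 ≤ n)
    (h : (b : EReal) < -(ENNReal.log g) / (n : EReal)) :
    g ≤ ENNReal.ofReal (Real.exp (-(b * n))) := by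
  have hn0 : (0 : EReal) < (n : EReal) := by
    rw [← EReal.coe_coe_eq_natCast]
    exact_mod_cast (by exact_mod_cast hn : (0:ℝ) < (n:ℝ))
  have h2 : ¬(-(ENNReal.log g) / (n : EReal) ≤ (b : EReal)) := not_le.2 h
  rw [EReal.div_le_iff_le_mul hn0 (EReal.natCast_ne_top n)] at h2
  have h3 : (n : EReal) * (b : EReal) < -(ENNReal.log g) := not_le.1 h2
  have h4 : ENNReal.log g < -((n : EReal) * (b : EReal)) := EReal.lt_neg_of_lt_neg h3
  have h5 : -((n : EReal) * (b : EReal)) = ((-(b * n) : ℝ) : EReal) := by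
    rw [← EReal.coe_coe_eq_natCast, ← EReal.coe_mul, ← EReal.coe_neg]
    norm_cast
    ring
  rw [h5] at h4
  calc g = EReal.exp (ENNReal.log g) := (ENNReal.exp_log g).symm
    _ ≤ EReal.exp ((-(b * n) : ℝ) : EReal) := EReal.exp_monotone h4.le
    _ = ENNReal.ofReal (Real.exp (-(b * n))) := EReal.exp_coe _

end AuxLemmas

open scoped ENNReal NNReal

section Theorems

variable [MetricSpace X] [CompactSpace X] [Nonempty X] [MeasurableSpace X] [BorelSpace X]

/-- Katok's entropy at scale `ε/4` is bounded below by any μ-a.e. lower bound `c` on the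
lower Brin-Katok local entropy at scale `ε` (Proposition 5.1). -/
theorem katokEnt_ge_of_ae_le_brinKatokLower (T : X → X) (hT : IsHomeomorph T)
    (μ : Measure X) (hμ : μ ∈ ergodicMeasures T)
    (δ : ℝ) (hδ : δ ∈ Set.Ioo (0:ℝ) 1) (ε : ℝ) (hε : 0 < ε)
    (c : ℝ) (hc : 0 ≤ c)
    (h : ∀ᵐ x ∂μ, (c : EReal) ≤ brinKatokLower T μ x ε) :
    (c : EReal) ≤ katokEnt T μ (ε / 4) δ := by
  obtain ⟨hδ0, hδ1⟩ := hδ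
  have hprob : IsProbabilityMeasure μ := hμ.1
  have hTc : Continuous T := hT.continuous
  have hε4 : 0 < ε / 4 := by linarith
  -- Main claim: for every real b < c, (b : EReal) ≤ katokEnt.
  have key : ∀ b : ℝ, b < c → (b : EReal) ≤ katokEnt T μ (ε / 4) δ := by
    intro b hb
    set bnd : ℕ → ℝ≥0∞ := fun n => ENNReal.ofReal (Real.exp (-(b * n))) with hbnd
    set g : ℕ → X → ℝ≥0∞ := fun n x => μ (dynBall T n x ε) with hg
    have hgmeas : ∀ n, Measurable (g n) := fun n =>
      (lowerSemicontinuous_measure_dynBall hTc μ n hε).measurable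
    -- a.e. eventual bound
    have hae : ∀ᵐ x ∂μ, ∀ᶠ n in atTop, g n x ≤ bnd n := by
      filter_upwards [h] with x hx
      have h1 : (b : EReal) <
          liminf (fun n : ℕ => -(ENNReal.log (μ (dynBall T n x ε))) / (n : EReal)) atTop :=
        lt_of_lt_of_le (by exact_mod_cast hb) hx
      have h2 := Filter.eventually_lt_of_lt_liminf h1
      filter_upwards [h2, eventually_ge_atTop 1] with n hn hn1
      exact le_exp_bound_of_lt hn1 hn
    -- the sets A N
    set A : ℕ → Set X := fun N => ⋂ (n : ℕ) (_ : N ≤ n), {x | g n x ≤ bnd n} with hA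
    have hAmeas : ∀ N, MeasurableSet (A N) := fun N =>
      MeasurableSet.iInter fun n => MeasurableSet.iInter fun _ =>
        measurableSet_le (hgmeas n) measurable_const
    have hAmono : Monotone A := by
      intro N N' hNN'
      exact iInter₂_mono' fun n hn => ⟨n, hNN'.trans hn, le_rfl⟩
    have hAcover : ∀ᵐ x ∂μ, x ∈ ⋃ N, A N := by
      filter_upwards [hae] with x hx
      obtain ⟨N, hN⟩ := eventually_atTop.1 hx
      exact mem_iUnion.2 ⟨N, by simpa [hA] using fun n hn => hN n hn⟩
    have hAc0 : μ (⋂ N, (A N)ᶜ) = 0 := by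
      have h0 := ae_iff.1 hAcover
      convert h0 using 2
      ext x; simp
    have htend : Tendsto (fun N => μ ((A N)ᶜ)) atTop (𝓝 0) := by
      have h1 : Tendsto (μ ∘ fun N => (A N)ᶜ) atTop (𝓝 (μ (⋂ N, (A N)ᶜ))) :=
        tendsto_measure_iInter_atTop (fun N => ((hAmeas N).compl).nullMeasurableSet)
          (fun N N' hNN' => compl_subset_compl.2 (hAmono hNN')) ⟨0, measure_ne_top μ _⟩
      rw [hAc0] at h1
      exact h1
    obtain ⟨N, hN⟩ :=
      (htend.eventually_lt_const (ENNReal.ofReal_pos.2 (by linarith : (0:ℝ) < δ/2))).exists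
    -- key counting estimate
    have hcount : ∀ n : ℕ, N ≤ n → 1 ≤ n →
        Real.log (δ/2) + b * n ≤ Real.log (katokNum T μ n (ε/4) δ) := by
      intro n hNn hn1
      obtain ⟨t, ht⟩ := isCompact_univ.elim_finite_subcover
        (fun x : X => dynBall T n x (ε/4)) (fun x => isOpen_dynBall hTc n x hε4)
        (fun x _ => mem_iUnion.2 ⟨x, mem_dynBall_self T n x hε4⟩)
      have hne : {m | ∃ F : Finset X,
          ENNReal.ofReal δ < μ (⋃ x ∈ F, dynBall T n x (ε/4)) ∧ F.card = m}.Nonempty := by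
        refine ⟨t.card, t, ?_, rfl⟩
        have h1 : (1:ℝ≥0∞) ≤ μ (⋃ x ∈ t, dynBall T n x (ε/4)) := by
          rw [← measure_univ (μ := μ)]; exact measure_mono ht
        exact lt_of_lt_of_le (ENNReal.ofReal_lt_one.2 hδ1) h1
      have hmem : katokNum T μ n (ε/4) δ ∈ {m | ∃ F : Finset X,
          ENNReal.ofReal δ < μ (⋃ x ∈ F, dynBall T n x (ε/4)) ∧ F.card = m} :=
        Nat.sInf_mem hne
      obtain ⟨F, hF, hFcard⟩ := hmem
      set U := ⋃ x ∈ F, dynBall T n x (ε/4) with hU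
      have hUA : ENNReal.ofReal (δ/2) < μ (U ∩ A N) := by
        have h1 : μ U ≤ μ (U ∩ A N) + μ ((A N)ᶜ) :=
          (measure_le_inter_add_diff μ U (A N)).trans
            (add_le_add_right (measure_mono (fun x hx => hx.2)) _)
        have h2 : ENNReal.ofReal δ < μ (U ∩ A N) + ENNReal.ofReal (δ/2) :=
          lt_of_lt_of_le hF (h1.trans (add_le_add_right hN.le _))
        have h3 : ENNReal.ofReal (δ/2) + ENNReal.ofReal (δ/2) = ENNReal.ofReal δ := by
          rw [← ENNReal.ofReal_add (by linarith) (by linarith)]; norm_num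
        rw [← h3] at h2
        exact (ENNReal.add_lt_add_iff_right ENNReal.ofReal_ne_top).1 h2
      have hball : ∀ y ∈ F, μ (dynBall T n y (ε/4) ∩ A N) ≤ bnd n := by
        intro y _
        rcases (dynBall T n y (ε/4) ∩ A N).eq_empty_or_nonempty with he | ⟨x, hxB, hxA⟩
        · simp [he]
        · have hsub : dynBall T n y (ε/4) ⊆ dynBall T n x ε := by
            intro z hz
            have h1 := dynDist_triangle T n x y z
            have h2 : dynDist T n x y < ε/4 := by rw [dynDist_comm]; exact hxB
            simp only [dynBall, mem_setOf_eq] at hz ⊢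
            linarith
          have hxbnd : g n x ≤ bnd n := by
            simp only [hA, mem_iInter, mem_setOf_eq] at hxA
            exact hxA n hNn
          calc μ (dynBall T n y (ε/4) ∩ A N) ≤ μ (dynBall T n x ε) :=
                measure_mono (inter_subset_left.trans hsub)
            _ ≤ bnd n := hxbnd
      have hsum : μ (U ∩ A N) ≤ (F.card : ℝ≥0∞) * bnd n := by
        calc μ (U ∩ A N) ≤ ∑ y ∈ F, μ (dynBall T n y (ε/4) ∩ A N) := by
              rw [hU, iUnion₂_inter]
              exact measure_biUnion_finset_le F _
          _ ≤ F.card • bnd n := Finset.sum_le_card_nsmul F _ _ (fun y hy => hball y hy)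
          _ = (F.card : ℝ≥0∞) * bnd n := nsmul_eq_mul _ _
      have hlt : ENNReal.ofReal (δ/2) < (F.card : ℝ≥0∞) * bnd n := lt_of_lt_of_le hUA hsum
      have hreal : δ/2 < (F.card : ℝ) * Real.exp (-(b*n)) := by
        have heq : (F.card : ℝ≥0∞) * bnd n
            = ENNReal.ofReal ((F.card : ℝ) * Real.exp (-(b*n))) := by
          rw [hbnd, ← ENNReal.ofReal_natCast, ← ENNReal.ofReal_mul (Nat.cast_nonneg _)]
        rw [heq] at hlt
        exact (ENNReal.ofReal_lt_ofReal_iff_of_nonneg (by linarith)).1 hlt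
      have hcard : δ/2 * Real.exp (b*n) < (F.card : ℝ) := by
        rw [Real.exp_neg] at hreal
        have hdiv : δ/2 < (F.card : ℝ) / Real.exp (b*n) := by rwa [div_eq_mul_inv]
        exact (lt_div_iff₀ (Real.exp_pos _)).1 hdiv
      have hlog : Real.log (δ/2) + b*n ≤ Real.log (F.card : ℝ) := by
        have hpos : (0:ℝ) < δ/2 * Real.exp (b*n) := by positivity
        calc Real.log (δ/2) + b*n
            = Real.log (δ/2 * Real.exp (b*n)) := by
              rw [Real.log_mul (by linarith) (Real.exp_ne_zero _), Real.log_exp]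
          _ ≤ Real.log (F.card : ℝ) := Real.log_le_log hpos hcard.le
      rwa [hFcard] at hlog
    -- pass to the limit
    have hev : ∀ᶠ n : ℕ in atTop,
        ((Real.log (δ/2) / n + b : ℝ) : EReal) ≤
          ((Real.log (katokNum T μ n (ε/4) δ) / n : ℝ) : EReal) := by
      filter_upwards [eventually_ge_atTop N, eventually_ge_atTop 1] with n hNn hn1
      have hn0 : (0:ℝ) < n := by exact_mod_cast hn1
      have h1 := hcount n hNn hn1
      rw [EReal.coe_le_coe_iff]
      have h2 : (Real.log (δ/2) + b * n) / n ≤ Real.log (katokNum T μ n (ε/4) δ) / n := by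
        gcongr
      calc Real.log (δ/2) / n + b = (Real.log (δ/2) + b * n) / n := by field_simp
        _ ≤ _ := h2
    have htendb : Tendsto (fun n : ℕ => ((Real.log (δ/2) / n + b : ℝ) : EReal)) atTop
        (𝓝 (b : EReal)) := by
      rw [EReal.tendsto_coe]
      have h0 : Tendsto (fun n : ℕ => Real.log (δ/2) / n + b) atTop (𝓝 (0 + b)) :=
        (tendsto_const_div_atTop_nhds_zero_nat _).add tendsto_const_nhds
      simpa using h0
    calc (b : EReal) = liminf (fun n : ℕ => ((Real.log (δ/2) / n + b : ℝ) : EReal)) atTop :=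
          (htendb.liminf_eq).symm
      _ ≤ liminf (fun n : ℕ =>
            ((Real.log (katokNum T μ n (ε/4) δ) / n : ℝ) : EReal)) atTop :=
          liminf_le_liminf hev
      _ ≤ katokEnt T μ (ε/4) δ := liminf_le_limsup
  -- conclude by approximation
  by_contra hcon
  push_neg at hcon
  obtain ⟨z, hz1, hz2⟩ := exists_between hcon
  have hzbot : z ≠ ⊥ := (bot_le.trans_lt hz1).ne'
  have hztop : z ≠ ⊤ := (hz2.trans_le le_top).ne
  lift z to ℝ using ⟨hztop, hzbot⟩
  exact absurd (key z (by exact_mod_cast hz2)) (not_le.2 hz1)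


end Theorems
end

section
/- Let (X, d, T) be a topological dynamical system. Then the lower metric mean dimension satisfies mdim̲_M(X,d,T) = liminf_{ε→0} (1/log(1/ε)) · sup_{x ∈ X} h_d(x, ε), where h_d is the local entropy function. -/
open Filter MeasureTheory Set Topology

variable {X : Type*}

section Theorems

section AuxProofs

variable [MetricSpace X]

private lemma natlog_mono : Monotone fun m : ℕ => Real.log m := by
  intro a b hab
  rcases Nat.eq_zero_or_pos a with rfl | ha
  · simpa using Real.log_natCast_nonneg b
  · exact Real.log_le_log (by exact_mod_cast ha) (by exact_mod_cast hab)

private lemma natlog_mul_le (a b : ℕ) :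
    Real.log (a * b : ℕ) ≤ Real.log a + Real.log b := by
  rcases Nat.eq_zero_or_pos a with rfl | ha
  · simpa using Real.log_natCast_nonneg b
  rcases Nat.eq_zero_or_pos b with rfl | hb
  · simpa using Real.log_natCast_nonneg a
  · rw [Nat.cast_mul, Real.log_mul (by exact_mod_cast ha.ne') (by exact_mod_cast hb.ne')]

private lemma dynDist_le_of_forall {T : X → X} {n : ℕ} {x y : X} {ε : ℝ} (hε : 0 ≤ ε)
    (h : ∀ k < n, dist (T^[k] x) (T^[k] y) ≤ ε) : dynDist T n x y ≤ ε :=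
  Real.iSup_le (fun k => Real.iSup_le (fun hk => h k (Finset.mem_range.mp hk)) hε) hε

/-- In a compact space, the cardinality of `(n,ε)`-separated sets is uniformly bounded. -/
private lemma sep_card_bdd [CompactSpace X] (T : X → X) (n : ℕ) {ε : ℝ} (hε : 0 < ε) :
    ∃ N : ℕ, ∀ E : Finset X,
      (∀ x ∈ E, ∀ y ∈ E, x ≠ y → ε < dynDist T n x y) → E.card ≤ N := by
  obtain ⟨t, -, htf, hcov⟩ :=
    finite_cover_balls_of_compact (isCompact_univ (X := X)) (half_pos hε)
  classical
  set s : Finset X := htf.toFinset with hs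
  have hmem : ∀ w : X, ∃ c ∈ s, w ∈ Metric.ball c (ε / 2) := by
    intro w
    have := hcov (mem_univ w)
    simp only [mem_iUnion] at this
    obtain ⟨c, hc, hw⟩ := this
    exact ⟨c, by simpa [hs] using hc, hw⟩
  choose c hcs hcball using hmem
  refine ⟨Fintype.card (Fin n → {x // x ∈ s}), fun E hE => ?_⟩
  have : ∀ x ∈ E, (fun k : Fin n => (⟨c (T^[(k:ℕ)] x), hcs _⟩ : {x // x ∈ s})) ∈
      (Finset.univ : Finset (Fin n → {x // x ∈ s})) := fun _ _ => Finset.mem_univ _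
  have hinj : Set.InjOn (fun x : X => fun k : Fin n =>
      (⟨c (T^[(k:ℕ)] x), hcs _⟩ : {x // x ∈ s})) E := by
    intro x hx y hy hxy
    by_contra hne
    have hsep := hE x hx y hy hne
    have hle : dynDist T n x y ≤ ε := by
      refine dynDist_le_of_forall hε.le fun k hk => ?_
      have hck : c (T^[k] x) = c (T^[k] y) := by
        have := congrFun hxy ⟨k, hk⟩
        simpa using congrArg Subtype.val this
      have h1 := hcball (T^[k] x)
      have h2 := hcball (T^[k] y)
      rw [hck] at h1
      rw [Metric.mem_ball] at h1
      rw [Metric.mem_ball] at h2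
      calc dist (T^[k] x) (T^[k] y) ≤ dist (T^[k] x) (c (T^[k] y)) + dist (c (T^[k] y)) (T^[k] y)
            := dist_triangle _ _ _
        _ ≤ ε / 2 + ε / 2 := by
            rw [dist_comm (c (T^[k] y)) (T^[k] y)]; exact add_le_add h1.le h2.le
        _ = ε := by ring
    exact absurd hsep (not_lt.mpr hle)
  exact Finset.card_le_card_of_injOn _ this hinj

private lemma sepSet_bddAbove [CompactSpace X] (T : X → X) (n : ℕ) {ε : ℝ} (hε : 0 < ε)
    (K : Set X) :
    BddAbove {m | ∃ E : Finset X, ↑E ⊆ K ∧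
      (∀ x ∈ E, ∀ y ∈ E, x ≠ y → ε < dynDist T n x y) ∧ E.card = m} := by
  obtain ⟨N, hN⟩ := sep_card_bdd T n hε
  exact ⟨N, fun m ⟨E, _, hsep, hcard⟩ => hcard ▸ hN E hsep⟩

private lemma zero_mem_sepSet (T : X → X) (n : ℕ) (ε : ℝ) (K : Set X) :
    0 ∈ {m | ∃ E : Finset X, ↑E ⊆ K ∧
      (∀ x ∈ E, ∀ y ∈ E, x ≠ y → ε < dynDist T n x y) ∧ E.card = m} :=
  ⟨∅, by simp, by simp, rfl⟩

private lemma sepNum_le_sum [CompactSpace X] (T : X → X) (n : ℕ) {ε : ℝ} (hε : 0 < ε)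
    {ι : Type*} (t : Finset ι) (K : ι → Set X) (hcov : (univ : Set X) ⊆ ⋃ i ∈ t, K i) :
    sepNum T n univ ε ≤ ∑ i ∈ t, sepNum T n (K i) ε := by
  classical
  refine csSup_le ⟨0, zero_mem_sepSet T n ε univ⟩ ?_
  rintro m ⟨E, -, hsep, rfl⟩
  have hmem : ∀ e : X, ∃ i, i ∈ t ∧ e ∈ K i := by
    intro e
    have := hcov (mem_univ e)
    simpa only [mem_iUnion, exists_prop] using this
  choose g hgt hgK using hmem
  rw [Finset.card_eq_sum_card_fiberwise (f := g) (t := t) fun x _ => hgt x]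
  refine Finset.sum_le_sum fun i _ => ?_
  refine le_csSup (sepSet_bddAbove T n hε (K i)) ?_
  refine ⟨E.filter (fun e => g e = i), ?_, ?_, rfl⟩
  · intro e he
    simp only [Finset.coe_filter, Set.mem_setOf_eq] at he
    exact he.2 ▸ hgK e
  · intro x hx y hy hxy
    exact hsep x (Finset.mem_of_mem_filter x hx) y (Finset.mem_of_mem_filter y hy) hxy

private lemma limsup_log_div_zero (C : ℝ) :
    limsup (fun n : ℕ => ((C / n : ℝ) : EReal)) atTop = 0 := by
  have h : Tendsto (fun n : ℕ => ((C / n : ℝ) : EReal)) atTop (𝓝 (((0:ℝ) : EReal))) :=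
    (continuous_coe_real_ereal.tendsto 0).comp (tendsto_const_div_atTop_nhds_zero_nat C)
  simpa using h.limsup_eq

private lemma key_limsup_sum {ι : Type*} (t : Finset ι) (ht : t.Nonempty) (f : ι → ℕ → ℕ)
    {b : EReal}
    (hb : ∀ i ∈ t, limsup (fun n : ℕ => ((Real.log (f i n) / n : ℝ) : EReal)) atTop ≤ b) :
    limsup (fun n : ℕ => ((Real.log ((∑ i ∈ t, f i n : ℕ) : ℝ) / n : ℝ) : EReal)) atTop ≤ b := by
  classical
  set F : ι → ℕ → EReal := fun i n => ((Real.log (f i n) / n : ℝ) : EReal) with hF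
  have step : ∀ n : ℕ, ((Real.log ((∑ i ∈ t, f i n : ℕ) : ℝ) / n : ℝ) : EReal) ≤
      ((Real.log t.card / n : ℝ) : EReal) + t.sup' ht (fun i => F i n) := by
    intro n
    set M : ℕ := t.sup' ht (fun i => f i n) with hM
    obtain ⟨i₀, hi₀, hMi₀⟩ := Finset.exists_mem_eq_sup' ht (fun i => f i n)
    have hsum : (∑ i ∈ t, f i n) ≤ t.card * M := by
      have := Finset.sum_le_card_nsmul t (fun i => f i n) M
        (fun i hi => Finset.le_sup' (fun i => f i n) hi)
      simpa [smul_eq_mul] using this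
    have h1 : Real.log ((∑ i ∈ t, f i n : ℕ) : ℝ) ≤ Real.log t.card + Real.log M :=
      le_trans (natlog_mono hsum) (natlog_mul_le _ _)
    have h2 : Real.log ((∑ i ∈ t, f i n : ℕ) : ℝ) / n ≤ Real.log t.card / n + Real.log M / n := by
      rw [← add_div]
      exact div_le_div_of_nonneg_right h1 (Nat.cast_nonneg n)
    have h3 : ((Real.log M / n : ℝ) : EReal) ≤ t.sup' ht (fun i => F i n) := by
      have : ((Real.log M / n : ℝ) : EReal) = F i₀ n := by rw [hF]; simp [hM, hMi₀]
      rw [this]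
      exact Finset.le_sup' (fun i => F i n) hi₀
    calc ((Real.log ((∑ i ∈ t, f i n : ℕ) : ℝ) / n : ℝ) : EReal)
        ≤ ((Real.log t.card / n + Real.log M / n : ℝ) : EReal) := by exact_mod_cast h2
      _ = ((Real.log t.card / n : ℝ) : EReal) + ((Real.log M / n : ℝ) : EReal) := by
          rw [EReal.coe_add]
      _ ≤ _ := add_le_add le_rfl h3
  have hC : limsup (fun n : ℕ => ((Real.log t.card / n : ℝ) : EReal)) atTop = 0 :=
    limsup_log_div_zero _
  calc limsup (fun n : ℕ => ((Real.log ((∑ i ∈ t, f i n : ℕ) : ℝ) / n : ℝ) : EReal)) atTop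
      ≤ limsup ((fun n : ℕ => ((Real.log t.card / n : ℝ) : EReal)) +
          fun n => t.sup' ht (fun i => F i n)) atTop :=
        limsup_le_limsup (Eventually.of_forall step)
    _ ≤ limsup (fun n : ℕ => ((Real.log t.card / n : ℝ) : EReal)) atTop +
          limsup (fun n => t.sup' ht (fun i => F i n)) atTop :=
        EReal.limsup_add_le (Or.inl (by simp [hC])) (Or.inl (by simp [hC]))
    _ = limsup (fun n => t.sup' ht (fun i => F i n)) atTop := by rw [hC, zero_add]
    _ = t.sup' ht (fun i => limsup (F i) atTop) := limsup_finset_sup' ht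
    _ ≤ b := Finset.sup'_le ht _ fun i hi => hb i hi

private lemma sepEnt_univ_le_of_cover [CompactSpace X] {T : X → X} {ε : ℝ} (hε : 0 < ε)
    {ι : Type*} (t : Finset ι) (ht : t.Nonempty) (K : ι → Set X)
    (hcov : (univ : Set X) ⊆ ⋃ i ∈ t, K i)
    {b : EReal} (hb : ∀ i ∈ t, sepEnt T (K i) ε ≤ b) : sepEnt T univ ε ≤ b := by
  refine le_trans (limsup_le_limsup (Eventually.of_forall fun n => ?_))
    (key_limsup_sum t ht (fun i n => sepNum T n (K i) ε) hb)
  show ((Real.log (sepNum T n univ ε) / n : ℝ) : EReal) ≤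
    ((Real.log ((∑ i ∈ t, sepNum T n (K i) ε : ℕ) : ℝ) / n : ℝ) : EReal)
  have h1 : Real.log (sepNum T n univ ε : ℝ) ≤
      Real.log ((∑ i ∈ t, sepNum T n (K i) ε : ℕ) : ℝ) :=
    natlog_mono (sepNum_le_sum T n hε t K hcov)
  exact_mod_cast div_le_div_of_nonneg_right h1 (Nat.cast_nonneg n)

private lemma sepEnt_univ_eq_iSup_locEnt [CompactSpace X] [Nonempty X] (T : X → X) {ε : ℝ}
    (hε : 0 < ε) : sepEnt T (univ : Set X) ε = ⨆ x : X, locEnt T x ε := by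
  refine le_antisymm ?_ (iSup_le fun x => iInf₂_le univ ⟨isClosed_univ, univ_mem⟩)
  refine le_of_forall_gt_imp_ge_of_dense fun b hb => ?_
  have hx : ∀ x : X, ∃ K : Set X, (IsClosed K ∧ K ∈ 𝓝 x) ∧ sepEnt T K ε < b := by
    intro x
    have hlt : locEnt T x ε < b := lt_of_le_of_lt (le_iSup (fun x => locEnt T x ε) x) hb
    rw [locEnt, iInf_lt_iff] at hlt
    obtain ⟨K, hK⟩ := hlt
    rw [iInf_lt_iff] at hK
    obtain ⟨hKmem, hKb⟩ := hK
    exact ⟨K, hKmem, hKb⟩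
  choose K hK hKb using hx
  have hcov : (univ : Set X) ⊆ ⋃ x : X, interior (K x) := fun y _ =>
    mem_iUnion.mpr ⟨y, mem_interior_iff_mem_nhds.mpr (hK y).2⟩
  obtain ⟨t, ht⟩ := isCompact_univ.elim_finite_subcover (fun x => interior (K x))
    (fun _ => isOpen_interior) hcov
  have htne : t.Nonempty := by
    obtain ⟨x0⟩ := ‹Nonempty X›
    have := ht (mem_univ x0)
    simp only [mem_iUnion] at this
    obtain ⟨i, hi, -⟩ := this
    exact ⟨i, hi⟩
  refine sepEnt_univ_le_of_cover hε t htne K ?_ fun i _ => (hKb i).le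
  refine subset_trans ht (iUnion₂_mono fun i _ => interior_subset)

end AuxProofs


variable [MetricSpace X] [CompactSpace X] [Nonempty X] [MeasurableSpace X] [BorelSpace X]

/-- The lower metric mean dimension in terms of the local entropy function
(Theorem 7.1). -/
theorem lower_mdim_eq_liminf_locEnt (T : X → X) (hT : IsHomeomorph T) :
    mdimLower T = liminf (fun ε : ℝ =>
      (⨆ x : X, locEnt T x ε) / ((Real.log (1 / ε) : ℝ) : EReal)) (𝓝[>] (0:ℝ)) := by
  have key : ∀ᶠ ε in 𝓝[>] (0:ℝ),
      sepEnt T (univ : Set X) ε / ((Real.log (1 / ε) : ℝ) : EReal) =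
      (⨆ x : X, locEnt T x ε) / ((Real.log (1 / ε) : ℝ) : EReal) := by
    filter_upwards [self_mem_nhdsWithin] with ε hε
    rw [sepEnt_univ_eq_iSup_locEnt T (mem_Ioi.mp hε)]
  exact liminf_congr key

end Theorems
end
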